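/- Let A be a real symmetric n×n matrix and let P be a real density matrix. If for some time t the matrix Q = U(t)·P·U(−t) has all entries real, then U(2t)·P·U(−2t) = P, and U(2t) commutes with both P and Q. -/

import Mathlib

open Matrix
open scoped ComplexOrder

/-- The transition matrix `U(t) = exp(itA)`. -/
noncomputable def U {n : ℕ} (A : Matrix (Fin n) (Fin n) ℂ) (t : ℝ) :
    Matrix (Fin n) (Fin n) ℂ :=
  NormedSpace.exp (((t : ℂ) * Complex.I) • A)

lemma U_mul {n : ℕ} (A : Matrix (Fin n) (Fin n) ℂ) (s t : ℝ) :
    U A s * U A t = U A (s + t) := by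
  unfold U
  rw [← Matrix.exp_add_of_commute _ _ (((Commute.refl A).smul_left _).smul_right _),
    ← add_smul]
  congr 2
  push_cast
  ring

lemma U_zero {n : ℕ} (A : Matrix (Fin n) (Fin n) ℂ) : U A 0 = 1 := by
  simp [U, NormedSpace.exp_zero]

lemma U_transpose {n : ℕ} (A : Matrix (Fin n) (Fin n) ℂ) (hAsym : Aᵀ = A) (t : ℝ) :
    (U A t)ᵀ = U A t := by
  unfold U
  rw [← Matrix.exp_transpose, Matrix.transpose_smul, hAsym]

theorem stmt_2 {n : ℕ} (hn : 1 ≤ n)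
    (A : Matrix (Fin n) (Fin n) ℂ)
    (hAreal : ∀ i j, (A i j).im = 0) (hAsym : Aᵀ = A)
    (P : Matrix (Fin n) (Fin n) ℂ)
    (hP : P.PosSemidef) (hPtr : P.trace = 1)
    (hPreal : ∀ i j, (P i j).im = 0)
    (t : ℝ) (Q : Matrix (Fin n) (Fin n) ℂ)
    (hQ : Q = U A t * P * U A (-t))
    (hQreal : ∀ i j, (Q i j).im = 0) :
    U A (2 * t) * P * U A (-(2 * t)) = P ∧
      U A (2 * t) * P = P * U A (2 * t) ∧
      U A (2 * t) * Q = Q * U A (2 * t) := by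
  have hinv : ∀ s : ℝ, U A s * U A (-s) = 1 := fun s => by
    rw [U_mul, add_neg_cancel, U_zero]
  have hPsym : Pᵀ = P := by
    have hPh := hP.1
    ext i j
    have := congrFun (congrFun hPh i) j
    simp only [Matrix.conjTranspose_apply] at this
    rw [Matrix.transpose_apply, ← this]
    exact (Complex.conj_eq_iff_im.2 (hPreal j i)).symm
  have hPherm : Pᴴ = P := hP.1
  have hQherm : Qᴴ = Q := by
    have hAherm : Aᴴ = A := by
      ext i j
      rw [Matrix.conjTranspose_apply]
      rw [show star (A j i) = A j i from Complex.conj_eq_iff_im.2 (hAreal j i)]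
      conv_rhs => rw [← hAsym]
      rfl
    have hUstar : ∀ s : ℝ, (U A s)ᴴ = U A (-s) := fun s => by
      unfold U
      rw [← Matrix.exp_conjTranspose]
      congr 1
      rw [Matrix.conjTranspose_smul, hAherm]
      congr 1
      simp [Complex.ext_iff]
    rw [hQ, Matrix.conjTranspose_mul, Matrix.conjTranspose_mul, hPherm, hUstar, hUstar,
      neg_neg, mul_assoc]
  have hQsym : Qᵀ = Q := by
    ext i j
    have := congrFun (congrFun hQherm i) j
    simp only [Matrix.conjTranspose_apply] at this
    rw [Matrix.transpose_apply, ← this]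
    exact (Complex.conj_eq_iff_im.2 (hQreal j i)).symm
  -- key identity: U(-t) P U(t) = U(t) P U(-t)
  have key : U A (-t) * P * U A t = U A t * P * U A (-t) := by
    calc U A (-t) * P * U A t = Qᵀ := by
          rw [hQ, Matrix.transpose_mul, Matrix.transpose_mul, hPsym,
            U_transpose A hAsym, U_transpose A hAsym, mul_assoc]
      _ = Q := hQsym
      _ = U A t * P * U A (-t) := hQ
  have swap : ∀ s s' : ℝ, U A s * U A s' = U A s' * U A s := fun s s' => by
    rw [U_mul, U_mul, add_comm]
  have e1 : U A t * U A (-t) = 1 := hinv t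
  have e2 : U A (-t) * U A t = 1 := by rw [U_mul, neg_add_cancel, U_zero]
  have e3 : U A t * U A t = U A (2 * t) := by rw [U_mul, two_mul]
  have hcommP : U A (2 * t) * P = P * U A (2 * t) := by
    have h := congrArg (fun M => U A t * M * U A t) key
    simp only [← mul_assoc] at h
    rw [e1, one_mul, mul_assoc P, e3, mul_assoc _ (U A (-t)) (U A t), e2, mul_one] at h
    exact h.symm
  refine ⟨by rw [hcommP, mul_assoc, hinv, mul_one], hcommP, ?_⟩
  rw [hQ]
  calc U A (2 * t) * (U A t * P * U A (-t))
      = U A t * (U A (2 * t) * P) * U A (-t) := by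
        rw [← mul_assoc, ← mul_assoc, swap (2 * t) t, mul_assoc (U A t)]
    _ = U A t * P * U A (-t) * U A (2 * t) := by
        rw [hcommP, ← mul_assoc, mul_assoc (U A t * P), swap (2 * t) (-t), ← mul_assoc,
          mul_assoc (U A t * P)]
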